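/- Let g ≥ 1, N ≥ 1, θ ∈ ℂ[z₁,…,z_g] a polynomial, x ∈ ℂ^g a point, and η₁, …, η_N ∈ ℂ^g vectors, with D_i = Σ_ℓ η_{iℓ} ∂/∂z_ℓ and Δ⁽ᵏ⁾ = Σ_{h₁+2h₂+⋯+k·h_k = k} (1/(h₁!⋯h_k!)) D₁^{h₁}⋯D_k^{h_k} for 1 ≤ k ≤ N (and Δ⁽⁰⁾ = id). Let δ : ℂ[z₁,…,z_g] → ℂ[t]/(t^{N+1}) be the ℂ-algebra homomorphism f ↦ Σ_{k=0}^{N} (Δ⁽ᵏ⁾f)(x)·tᵏ. Then δ annihilates the ideal of ℂ[z₁,…,z_g] generated by θ, ∂θ/∂z₁, …, ∂θ/∂z_g (i.e. the curvi-linear subscheme of length N+1 supported at x determined by (D₁,…,D_N) is contained in the singular scheme of the hypersurface θ = 0) if and only if θ(x) = 0 and (Δ⁽ᵏ⁾(∂θ/∂z_j))(x) = 0 for all 0 ≤ k ≤ N and all 1 ≤ j ≤ g. -/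

import Mathlib

/-- The partial derivative `∂/∂zᵢ` as a `ℂ`-linear endomorphism of `ℂ[z₁,…,z_g]`. -/
noncomputable def pderivEnd {g : ℕ} (i : Fin g) :
    Module.End ℂ (MvPolynomial (Fin g) ℂ) :=
  (MvPolynomial.pderiv i).toLinearMap

/-- The translation-invariant vector field `D = Σ_ℓ η_ℓ ∂/∂z_ℓ`. -/
noncomputable def vecField {g : ℕ} (η : Fin g → ℂ) :
    Module.End ℂ (MvPolynomial (Fin g) ℂ) :=
  ∑ i, η i • pderivEnd i

/-- Given vector fields `D₁, …, D_k`, the operator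
`Δ⁽ᵏ⁾ = Σ_{h₁+2h₂+⋯+k·h_k = k} (1/(h₁!⋯h_k!)) D₁^{h₁}⋯D_k^{h_k}`.  (Any solution `h`
of `Σ (i+1)·hᵢ = k` satisfies `hᵢ ≤ k`, so the sum is over functions `Fin k → Fin (k+1)`;
for `k = 0` this gives the identity operator `Δ⁽⁰⁾ = id`.) -/
noncomputable def deltaFormula {g : ℕ} (k : ℕ)
    (D : Fin k → Module.End ℂ (MvPolynomial (Fin g) ℂ)) :
    Module.End ℂ (MvPolynomial (Fin g) ℂ) :=
  ∑ h ∈ Finset.univ.filter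
      (fun h : Fin k → Fin (k + 1) => ∑ i : Fin k, ((i : ℕ) + 1) * ((h i : ℕ)) = k),
    (((∏ i : Fin k, Nat.factorial ((h i : ℕ))) : ℕ) : ℂ)⁻¹ •
      (List.ofFn fun i : Fin k => (D i) ^ ((h i : ℕ))).prod


lemma pderiv_pderiv_comm {g : ℕ} (i j : Fin g) (f : MvPolynomial (Fin g) ℂ) :
    MvPolynomial.pderiv i (MvPolynomial.pderiv j f) = MvPolynomial.pderiv j (MvPolynomial.pderiv i f) := by
  induction f using MvPolynomial.induction_on' with
  | monomial s a =>
    rcases eq_or_ne i j with rfl | hij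
    · rfl
    · simp only [MvPolynomial.pderiv_monomial]
      have h1 : (s - Finsupp.single j 1 : Fin g →₀ ℕ) i = s i := by
        simp [Finsupp.single_apply, Ne.symm hij]
      have h2 : (s - Finsupp.single i 1 : Fin g →₀ ℕ) j = s j := by
        simp [Finsupp.single_apply, hij]
      rw [h1, h2, tsub_right_comm]
      ring_nf
  | add p q hp hq => simp [hp, hq]

section ListProd
variable {M : Type*} [Monoid M]

lemma commute_prod_ofFn {k : ℕ} (D : Fin k → M) (x : M)
    (hx : ∀ j, Commute x (D j)) (e : Fin k → ℕ) :
    Commute x (List.ofFn fun j => D j ^ e j).prod := by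
  refine Commute.list_prod_right _ _ ?_
  intro y hy
  rw [List.mem_ofFn] at hy
  obtain ⟨j, rfl⟩ := hy
  exact (hx j).pow_right _

lemma prod_ofFn_pow_add {k : ℕ} (D : Fin k → M)
    (hD : ∀ a b, Commute (D a) (D b)) (u v : Fin k → ℕ) :
    (List.ofFn fun j => D j ^ (u j + v j)).prod
      = (List.ofFn fun j => D j ^ u j).prod * (List.ofFn fun j => D j ^ v j).prod := by
  induction k with
  | zero => simp
  | succ n ih =>
    rw [List.ofFn_succ, List.ofFn_succ, List.ofFn_succ, List.prod_cons, List.prod_cons,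
      List.prod_cons, pow_add,
      ih (fun j => D j.succ) (fun a b => hD _ _) (fun j => u j.succ) (fun j => v j.succ)]
    have hc : Commute (D 0 ^ v 0)
        ((List.ofFn fun j : Fin n => D j.succ ^ u j.succ).prod) :=
      (commute_prod_ofFn (fun j => D j.succ) (D 0) (fun j => hD _ _)
        (fun j => u j.succ)).pow_left _
    calc D 0 ^ u 0 * D 0 ^ v 0 *
          ((List.ofFn fun j : Fin n => D j.succ ^ u j.succ).prod *
           (List.ofFn fun j : Fin n => D j.succ ^ v j.succ).prod)
        = D 0 ^ u 0 * (D 0 ^ v 0 *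
            (List.ofFn fun j : Fin n => D j.succ ^ u j.succ).prod) *
           (List.ofFn fun j : Fin n => D j.succ ^ v j.succ).prod := by
          simp [mul_assoc]
      _ = _ := by rw [hc.eq]; simp [mul_assoc]

lemma prod_ofFn_pow_single {k : ℕ} (D : Fin k → M) (i : Fin k) :
    (List.ofFn fun j => D j ^ (if j = i then 1 else 0)).prod = D i := by
  induction k with
  | zero => exact i.elim0
  | succ n ih =>
    rw [List.ofFn_succ, List.prod_cons]
    rcases Fin.eq_zero_or_eq_succ i with rfl | ⟨i', rfl⟩
    · rw [if_pos rfl, pow_one]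
      have : (List.ofFn fun j : Fin n => D j.succ ^ (if j.succ = 0 then 1 else 0)).prod = 1 := by
        apply List.prod_eq_one
        intro y hy
        rw [List.mem_ofFn] at hy
        obtain ⟨j, rfl⟩ := hy
        simp [Fin.succ_ne_zero]
      rw [this, mul_one]
    · have h0 : (0 : Fin (n+1)) ≠ i'.succ := (Fin.succ_ne_zero i').symm
      rw [if_neg h0, pow_zero, one_mul]
      have := ih (fun j => D j.succ) i'
      simp only [Fin.succ_inj] at *
      convert this using 2
    
lemma prod_ofFn_restrict {k k' : ℕ} (hk : k' ≤ k) (D : Fin k → M) (e : Fin k → ℕ)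
    (he : ∀ j : Fin k, k' ≤ (j : ℕ) → e j = 0) :
    (List.ofFn fun j => D j ^ e j).prod
      = (List.ofFn fun j : Fin k' =>
          D (Fin.castLE hk j) ^ e (Fin.castLE hk j)).prod := by
  induction k with
  | zero =>
    have : k' = 0 := Nat.le_zero.mp hk
    subst this; rfl
  | succ n ih =>
    rcases Nat.lt_or_ge k' (n+1) with h | h
    · have hk'n : k' ≤ n := Nat.lt_succ_iff.mp h
      rw [List.ofFn_succ', List.concat_eq_append, List.prod_append, List.prod_cons,
        List.prod_nil, mul_one]
      have hlast : e (Fin.last n) = 0 := he _ (by simp [Fin.last]; omega)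
      rw [hlast, pow_zero, mul_one]
      have := ih hk'n (fun j => D j.castSucc) (fun j => e j.castSucc)
        (fun j hj => he _ (by simpa using hj))
      rw [this]; rfl
    · have : k' = n + 1 := le_antisymm hk h
      subst this
      rfl

-- helpers converting Fin-indexed sums/prods to range-indexed ones
lemma fin_weight_sum {n : ℕ} (u : Fin n → ℕ) :
    ∑ j : Fin n, ((j : ℕ) + 1) * u j
      = ∑ t ∈ Finset.range n, (t + 1) * (if ht : t < n then u ⟨t, ht⟩ else 0) := by
  rw [← Fin.sum_univ_eq_sum_range]
  exact Finset.sum_congr rfl (fun j _ => by simp [j.isLt])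

lemma fin_fact_prod {n : ℕ} (u : Fin n → ℕ) :
    ∏ j : Fin n, Nat.factorial (u j)
      = ∏ t ∈ Finset.range n, Nat.factorial (if ht : t < n then u ⟨t, ht⟩ else 0) := by
  rw [← Fin.prod_univ_eq_prod_range]
  exact Finset.prod_congr rfl (fun j _ => by simp [j.isLt])


section Claim
variable {g k : ℕ} (D : Fin k → Module.End ℂ (MvPolynomial (Fin g) ℂ)) (i : Fin k)

-- the two reindexing maps
def phiMap (i : Fin k) (h : Fin k → Fin (k + 1)) (j : Fin (k - ((i : ℕ) + 1))) :
    Fin (k - ((i : ℕ) + 1) + 1) :=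
  ⟨min ((h (Fin.castLE (Nat.sub_le k _) j) : ℕ) - (if (j : ℕ) = (i : ℕ) then 1 else 0))
      (k - ((i : ℕ) + 1)),
    Nat.lt_succ_of_le (Nat.min_le_right _ _)⟩

def psiMap (i : Fin k) (h' : Fin (k - ((i : ℕ) + 1)) → Fin (k - ((i : ℕ) + 1) + 1))
    (j : Fin k) : Fin (k + 1) :=
  ⟨min ((if hj : (j : ℕ) < k - ((i : ℕ) + 1) then (h' ⟨(j : ℕ), hj⟩ : ℕ) else 0)
      + (if (j : ℕ) = (i : ℕ) then 1 else 0)) k,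
    Nat.lt_succ_of_le (Nat.min_le_right _ _)⟩

example : True := trivial
end Claim

lemma facts {k : ℕ} (i : Fin k) (h : Fin k → Fin (k + 1))
    (hcond : ∑ j : Fin k, ((j : ℕ) + 1) * ((h j : ℕ)) = k) (hne : (h i : ℕ) ≠ 0) :
    (∀ j : Fin k, j ≠ i → (k - ((i : ℕ) + 1)) ≤ (j : ℕ) → (h j : ℕ) = 0) ∧
    ((k - ((i : ℕ) + 1)) ≤ (i : ℕ) → (h i : ℕ) = 1) ∧
    (∀ j : Fin k, j ≠ i → ((j : ℕ) + 1) * (h j : ℕ) ≤ k - ((i : ℕ) + 1)) ∧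
    (((i : ℕ) + 1) * ((h i : ℕ) - 1) ≤ k - ((i : ℕ) + 1)) := by
  have him : (i : ℕ) + 1 ≤ k := i.isLt
  have hsingle : ((i : ℕ) + 1) * (h i : ℕ) ≤ k := by
    conv_rhs => rw [← hcond]
    exact Finset.single_le_sum (f := fun j : Fin k => ((j : ℕ) + 1) * (h j : ℕ)) (fun j _ => Nat.zero_le _) (Finset.mem_univ i)
  have hpair : ∀ j : Fin k, j ≠ i →
      ((j : ℕ) + 1) * (h j : ℕ) + ((i : ℕ) + 1) * (h i : ℕ) ≤ k := by
    intro j hji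
    conv_rhs => rw [← hcond]
    have := Finset.sum_le_sum_of_subset
      (Finset.subset_univ ({j, i} : Finset (Fin k)))
      (f := fun j : Fin k => ((j : ℕ) + 1) * (h j : ℕ))
    rwa [Finset.sum_pair hji] at this
  have hii : ((i : ℕ) + 1) ≤ ((i : ℕ) + 1) * (h i : ℕ) :=
    Nat.le_mul_of_pos_right _ (Nat.pos_of_ne_zero hne)
  have hfac : ((i : ℕ) + 1) * ((h i : ℕ) - 1) + ((i : ℕ) + 1) = ((i : ℕ) + 1) * (h i : ℕ) := by
    have h1 : (h i : ℕ) - 1 + 1 = (h i : ℕ) := Nat.succ_pred_eq_of_pos (Nat.pos_of_ne_zero hne)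
    calc ((i : ℕ) + 1) * ((h i : ℕ) - 1) + ((i : ℕ) + 1)
        = ((i : ℕ) + 1) * ((h i : ℕ) - 1 + 1) := by ring
      _ = _ := by rw [h1]
  refine ⟨?_, ?_, fun j hji => by have := hpair j hji; omega, by omega⟩
  · intro j hji hjk
    by_contra hne0
    have h1 : (j : ℕ) + 1 ≤ ((j : ℕ) + 1) * (h j : ℕ) :=
      Nat.le_mul_of_pos_right _ (Nat.pos_of_ne_zero hne0)
    have := hpair j hji
    omega
  · intro hik
    by_contra hne1
    have h2 : 2 ≤ (h i : ℕ) := by omega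
    have h3 : ((i : ℕ) + 1) * 2 ≤ ((i : ℕ) + 1) * (h i : ℕ) := Nat.mul_le_mul_left _ h2
    omega

lemma phi_val {k : ℕ} (i : Fin k) (h : Fin k → Fin (k + 1))
    (hcond : ∑ j : Fin k, ((j : ℕ) + 1) * ((h j : ℕ)) = k) (hne : (h i : ℕ) ≠ 0)
    (j : Fin (k - ((i : ℕ) + 1))) :
    (phiMap i h j : ℕ)
      = (h (Fin.castLE (Nat.sub_le k _) j) : ℕ) - (if (j : ℕ) = (i : ℕ) then 1 else 0) := by
  obtain ⟨G1, G2, G3, G4⟩ := facts i h hcond hne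
  show min _ _ = _
  rcases eq_or_ne ((j : ℕ)) ((i : ℕ)) with hji | hji
  · have hcast : Fin.castLE (Nat.sub_le k _) j = i := Fin.ext hji
    rw [if_pos hji, hcast]
    have h5 : (h i : ℕ) - 1 ≤ ((i : ℕ) + 1) * ((h i : ℕ) - 1) :=
      Nat.le_mul_of_pos_left _ (Nat.succ_pos _)
    exact min_eq_left (by omega)
  · have hcast : Fin.castLE (Nat.sub_le k _) j ≠ i := by
      intro hc; exact hji (congrArg Fin.val hc)
    rw [if_neg hji]
    have h6 := G3 _ hcast
    have h7 : (h (Fin.castLE (Nat.sub_le k _) j) : ℕ)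
        ≤ ((j : ℕ) + 1) * (h (Fin.castLE (Nat.sub_le k _) j) : ℕ) :=
      Nat.le_mul_of_pos_left _ (Nat.succ_pos _)
    have h8 : ((Fin.castLE (Nat.sub_le k ((i : ℕ) + 1)) j : Fin k) : ℕ) = (j : ℕ) := rfl
    rw [h8] at h6
    exact min_eq_left (by omega)

lemma psi_facts {k : ℕ} (i : Fin k)
    (h' : Fin (k - ((i : ℕ) + 1)) → Fin (k - ((i : ℕ) + 1) + 1))
    (hcond : ∑ j : Fin (k - ((i : ℕ) + 1)), ((j : ℕ) + 1) * ((h' j : ℕ)) = k - ((i : ℕ) + 1)) :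
    ∀ j : Fin (k - ((i : ℕ) + 1)), ((j : ℕ) + 1) * (h' j : ℕ) ≤ k - ((i : ℕ) + 1) := by
  intro j
  conv_rhs => rw [← hcond]
  exact Finset.single_le_sum
    (f := fun j : Fin (k - ((i : ℕ) + 1)) => ((j : ℕ) + 1) * (h' j : ℕ))
    (fun j _ => Nat.zero_le _) (Finset.mem_univ j)

lemma psi_val {k : ℕ} (i : Fin k)
    (h' : Fin (k - ((i : ℕ) + 1)) → Fin (k - ((i : ℕ) + 1) + 1))
    (hcond : ∑ j : Fin (k - ((i : ℕ) + 1)), ((j : ℕ) + 1) * ((h' j : ℕ)) = k - ((i : ℕ) + 1)) (j : Fin k) :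
    (psiMap i h' j : ℕ)
      = (if hj : (j : ℕ) < k - ((i : ℕ) + 1) then (h' ⟨(j : ℕ), hj⟩ : ℕ) else 0)
        + (if (j : ℕ) = (i : ℕ) then 1 else 0) := by
  have him : (i : ℕ) + 1 ≤ k := i.isLt
  show min _ _ = _
  rcases Nat.lt_or_ge ((j : ℕ) : ℕ) (k - ((i : ℕ) + 1)) with hj | hj
  · rw [dif_pos hj]
    have h1 := psi_facts i h' hcond ⟨(j : ℕ), hj⟩
    have h2 : (h' ⟨(j : ℕ), hj⟩ : ℕ) ≤ ((j : ℕ) + 1) * (h' ⟨(j : ℕ), hj⟩ : ℕ) :=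
      Nat.le_mul_of_pos_left _ (Nat.succ_pos _)
    rcases eq_or_ne ((j : ℕ)) ((i : ℕ)) with hji | hji
    · rw [if_pos hji]; exact min_eq_left (by omega)
    · rw [if_neg hji]; exact min_eq_left (by omega)
  · rw [dif_neg (by omega)]
    rcases eq_or_ne ((j : ℕ)) ((i : ℕ)) with hji | hji
    · rw [if_pos hji]; exact min_eq_left (by omega)
    · rw [if_neg hji]; exact min_eq_left (by omega)

lemma mul_pred_add (a b : ℕ) (hb : b ≠ 0) : a * (b - 1) + a = a * b := by
  obtain ⟨t, rfl⟩ : ∃ t, b = t + 1 := ⟨b - 1, by omega⟩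
  simp [Nat.mul_succ]


lemma range_split (k' k : ℕ) (hk : k' ≤ k) (A : ℕ → ℕ) :
    ∑ t ∈ Finset.range k', A t + ∑ t ∈ Finset.Ico k' k, A t = ∑ t ∈ Finset.range k, A t := by
  rw [Finset.range_eq_Ico, Finset.range_eq_Ico]
  exact Finset.sum_Ico_consecutive _ (Nat.zero_le _) hk

lemma phi_weight_core (k k' iv : ℕ) (A B : ℕ → ℕ) (hk' : k' + (iv + 1) = k) (hiv : iv < k)
    (hA : ∑ t ∈ Finset.range k, A t = k)
    (case1 : iv < k' → ((∀ t ∈ Finset.Ico k' k, A t = 0) ∧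
      (∀ t ∈ (Finset.range k').erase iv, B t = A t) ∧ B iv + (iv + 1) = A iv))
    (case2 : k' ≤ iv → ((∀ t ∈ Finset.Ico k' k, t ≠ iv → A t = 0) ∧ A iv = iv + 1 ∧
      ∀ t ∈ Finset.range k', B t = A t)) :
    ∑ t ∈ Finset.range k', B t = k' := by
  have hsplit := range_split k' k (by omega) A
  rcases Nat.lt_or_ge iv k' with hc | hc
  · obtain ⟨hico, hBA, hBi⟩ := case1 hc
    have hico0 : ∑ t ∈ Finset.Ico k' k, A t = 0 := Finset.sum_eq_zero hico
    have e1 := Finset.sum_erase_add (Finset.range k') B (Finset.mem_range.mpr hc)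
    have e2 := Finset.sum_erase_add (Finset.range k') A (Finset.mem_range.mpr hc)
    have e3 : ∑ t ∈ (Finset.range k').erase iv, B t
        = ∑ t ∈ (Finset.range k').erase iv, A t := Finset.sum_congr rfl hBA
    omega
  · obtain ⟨hz, hAi, hBA⟩ := case2 hc
    have hico : ∑ t ∈ Finset.Ico k' k, A t = A iv :=
      Finset.sum_eq_single_of_mem iv (Finset.mem_Ico.mpr ⟨hc, hiv⟩) hz
    have e3 : ∑ t ∈ Finset.range k', B t = ∑ t ∈ Finset.range k', A t :=
      Finset.sum_congr rfl hBA
    omega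

lemma psi_weight_core (k k' iv : ℕ) (A B : ℕ → ℕ) (hk' : k' + (iv + 1) = k)
    (hA : ∑ t ∈ Finset.range k', A t = k')
    (hB : ∀ t ∈ Finset.range k, B t
      = (if t < k' then A t else 0) + (t + 1) * (if t = iv then 1 else 0)) :
    ∑ t ∈ Finset.range k, B t = k := by
  rw [Finset.sum_congr rfl hB, Finset.sum_add_distrib]
  have h1 : ∑ t ∈ Finset.range k, (if t < k' then A t else 0) = k' := by
    have hsplit := range_split k' k (by omega) (fun t => if t < k' then A t else 0)
    have e1 : ∑ t ∈ Finset.range k', (if t < k' then A t else 0)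
        = ∑ t ∈ Finset.range k', A t :=
      Finset.sum_congr rfl (fun t ht => if_pos (Finset.mem_range.mp ht))
    have e2 : ∑ t ∈ Finset.Ico k' k, (if t < k' then A t else 0) = 0 :=
      Finset.sum_eq_zero (fun t ht => if_neg (by
        have := (Finset.mem_Ico.mp ht).1; omega))
    omega
  have h2 : ∑ t ∈ Finset.range k, (t + 1) * (if t = iv then 1 else 0) = iv + 1 := by
    rw [Finset.sum_eq_single_of_mem iv (Finset.mem_range.mpr (by omega))]
    · simp
    · intro b _ hbne; rw [if_neg hbne, mul_zero]
  omega

lemma phi_weight {k : ℕ} (i : Fin k) (h : Fin k → Fin (k + 1))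
    (hcond : ∑ j : Fin k, ((j : ℕ) + 1) * ((h j : ℕ)) = k) (hne : (h i : ℕ) ≠ 0) :
    ∑ j : Fin (k - ((i : ℕ) + 1)), ((j : ℕ) + 1) * ((phiMap i h j : ℕ))
      = k - ((i : ℕ) + 1) := by
  have him : (i : ℕ) + 1 ≤ k := i.isLt
  obtain ⟨G1, G2, G3, G4⟩ := facts i h hcond hne
  have hnz : 0 < (h i : ℕ) := Nat.pos_of_ne_zero hne
  have hcondR : ∑ t ∈ Finset.range k,
      (t + 1) * (if ht : t < k then ((h ⟨t, ht⟩ : ℕ)) else 0) = k :=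
    (fin_weight_sum (fun j : Fin k => ((h j : ℕ)))).symm.trans hcond
  rw [fin_weight_sum]
  refine phi_weight_core k (k - ((i : ℕ) + 1)) (i : ℕ)
    (fun t => (t + 1) * (if ht : t < k then ((h ⟨t, ht⟩ : ℕ)) else 0))
    (fun t => (t + 1) * (if ht : t < k - ((i : ℕ) + 1) then ((phiMap i h ⟨t, ht⟩ : ℕ)) else 0))
    (by omega) i.isLt hcondR ?_ ?_
  · intro hc
    refine ⟨?_, ?_, ?_⟩
    · intro t ht
      obtain ⟨ht1, ht2⟩ := Finset.mem_Ico.mp ht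
      have hne' : (⟨t, ht2⟩ : Fin k) ≠ i := by
        intro hh; have := congrArg Fin.val hh; simp at this; omega
      simp only [dif_pos ht2]
      rw [G1 _ hne' (by simpa using ht1), mul_zero]
    · intro t ht
      obtain ⟨htne, htmem⟩ := Finset.mem_erase.mp ht
      have ht' : t < k - ((i : ℕ) + 1) := Finset.mem_range.mp htmem
      have htk : t < k := by omega
      simp only [dif_pos ht', dif_pos htk, phi_val i h hcond hne]
      rw [if_neg htne, Nat.sub_zero]
      rfl
    · have hik : (i : ℕ) < k - ((i : ℕ) + 1) := hc
      simp only [dif_pos hik, dif_pos i.isLt, phi_val i h hcond hne]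
      show ((i : ℕ) + 1) * ((h i : ℕ) - 1) + ((i : ℕ) + 1) = ((i : ℕ) + 1) * (h i : ℕ)
      exact mul_pred_add _ _ hne
  · intro hc
    refine ⟨?_, ?_, ?_⟩
    · intro t ht htne
      obtain ⟨ht1, ht2⟩ := Finset.mem_Ico.mp ht
      have hne' : (⟨t, ht2⟩ : Fin k) ≠ i := by
        intro hh; have := congrArg Fin.val hh; simp at this; omega
      simp only [dif_pos ht2]
      rw [G1 _ hne' (by simpa using ht1), mul_zero]
    · simp only [dif_pos i.isLt]
      have heta : (h ⟨(i : ℕ), i.isLt⟩ : ℕ) = (h i : ℕ) := by rw [Fin.eta]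
      rw [heta, G2 hc, mul_one]
    · intro t ht
      have ht' : t < k - ((i : ℕ) + 1) := Finset.mem_range.mp ht
      have htk : t < k := by omega
      simp only [dif_pos ht', dif_pos htk, phi_val i h hcond hne]
      rw [if_neg (by omega : ¬ t = (i : ℕ)), Nat.sub_zero]
      rfl

lemma psi_weight {k : ℕ} (i : Fin k)
    (h' : Fin (k - ((i : ℕ) + 1)) → Fin (k - ((i : ℕ) + 1) + 1))
    (hcond : ∑ j : Fin (k - ((i : ℕ) + 1)), ((j : ℕ) + 1) * ((h' j : ℕ))
        = k - ((i : ℕ) + 1)) :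
    ∑ j : Fin k, ((j : ℕ) + 1) * ((psiMap i h' j : ℕ)) = k := by
  have him : (i : ℕ) + 1 ≤ k := i.isLt
  have hcondR : ∑ t ∈ Finset.range (k - ((i : ℕ) + 1)),
      (t + 1) * (if ht : t < k - ((i : ℕ) + 1) then ((h' ⟨t, ht⟩ : ℕ)) else 0)
        = k - ((i : ℕ) + 1) :=
    (fin_weight_sum (fun j => ((h' j : ℕ)))).symm.trans hcond
  rw [fin_weight_sum]
  refine psi_weight_core k (k - ((i : ℕ) + 1)) (i : ℕ)
    (fun t => (t + 1) * (if ht : t < k - ((i : ℕ) + 1) then ((h' ⟨t, ht⟩ : ℕ)) else 0))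
    _ (by omega) hcondR ?_
  intro t ht
  have htk : t < k := Finset.mem_range.mp ht
  simp only [dif_pos htk, psi_val i h' hcond, Nat.mul_add]
  rcases Nat.lt_or_ge t (k - ((i : ℕ) + 1)) with hc | hc
  · simp only [if_pos hc, dif_pos hc]
  · simp only [if_neg (by omega : ¬ t < k - ((i : ℕ) + 1)),
      dif_neg (by omega : ¬ t < k - ((i : ℕ) + 1)), mul_zero]

lemma phi_psi_left {k : ℕ} (i : Fin k) (h : Fin k → Fin (k + 1))
    (hcond : ∑ j : Fin k, ((j : ℕ) + 1) * ((h j : ℕ)) = k) (hne : (h i : ℕ) ≠ 0) :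
    psiMap i (phiMap i h) = h := by
  obtain ⟨G1, G2, G3, G4⟩ := facts i h hcond hne
  have hw := phi_weight i h hcond hne
  funext j
  apply Fin.ext
  rw [psi_val i _ hw j]
  rcases Nat.lt_or_ge ((j : ℕ) : ℕ) (k - ((i : ℕ) + 1)) with hj | hj
  · rw [dif_pos hj, phi_val i h hcond hne]
    have hcast : Fin.castLE (Nat.sub_le k ((i : ℕ) + 1)) ⟨(j : ℕ), hj⟩ = j := rfl
    rw [hcast]
    have hval : ((⟨(j : ℕ), hj⟩ : Fin (k - ((i : ℕ) + 1))) : ℕ) = (j : ℕ) := rfl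
    rw [hval]
    rcases eq_or_ne ((j : ℕ)) ((i : ℕ)) with hji | hji
    · rw [if_pos hji]
      have hji' : j = i := Fin.ext hji
      have hne2 : (h j : ℕ) ≠ 0 := by rw [hji']; exact hne
      omega
    · rw [if_neg hji]
      omega
  · rw [dif_neg (by omega)]
    rcases eq_or_ne ((j : ℕ)) ((i : ℕ)) with hji | hji
    · have : j = i := Fin.ext hji
      subst this
      rw [if_pos rfl, G2 (by omega), zero_add]
    · have hne' : j ≠ i := fun hc => hji (congrArg Fin.val hc)
      rw [if_neg hji, G1 j hne' hj]

lemma psi_ne_zero {k : ℕ} (i : Fin k)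
    (h' : Fin (k - ((i : ℕ) + 1)) → Fin (k - ((i : ℕ) + 1) + 1))
    (hcond : ∑ j : Fin (k - ((i : ℕ) + 1)), ((j : ℕ) + 1) * ((h' j : ℕ))
        = k - ((i : ℕ) + 1)) :
    (psiMap i h' i : ℕ) ≠ 0 := by
  rw [psi_val i h' hcond i, if_pos rfl]
  omega

lemma psi_phi_right {k : ℕ} (i : Fin k)
    (h' : Fin (k - ((i : ℕ) + 1)) → Fin (k - ((i : ℕ) + 1) + 1))
    (hcond : ∑ j : Fin (k - ((i : ℕ) + 1)), ((j : ℕ) + 1) * ((h' j : ℕ))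
        = k - ((i : ℕ) + 1)) :
    phiMap i (psiMap i h') = h' := by
  have hw := psi_weight i h' hcond
  have hnz := psi_ne_zero i h' hcond
  funext j
  apply Fin.ext
  rw [phi_val i _ hw hnz j]
  have hjlt : ((Fin.castLE (Nat.sub_le k ((i : ℕ) + 1)) j : Fin k) : ℕ)
      < k - ((i : ℕ) + 1) := j.isLt
  rw [psi_val i h' hcond, dif_pos hjlt]
  have heta : (⟨((Fin.castLE (Nat.sub_le k ((i : ℕ) + 1)) j : Fin k) : ℕ), hjlt⟩
      : Fin (k - ((i : ℕ) + 1))) = j := rfl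
  rw [heta]
  rcases eq_or_ne ((j : ℕ)) ((i : ℕ)) with hji | hji
  · have hc : ((Fin.castLE (Nat.sub_le k ((i : ℕ) + 1)) j : Fin k) : ℕ) = (i : ℕ) := hji
    rw [if_pos hc, if_pos hji]
    omega
  · have hc : ¬ ((Fin.castLE (Nat.sub_le k ((i : ℕ) + 1)) j : Fin k) : ℕ) = (i : ℕ) := hji
    rw [if_neg hc, if_neg hji]
    omega

lemma prod_core (k k' iv v : ℕ) (A B : ℕ → ℕ) (hk' : k' + (iv + 1) = k) (hiv : iv < k)
    (hIco : ∀ t ∈ Finset.Ico k' k, A t = 1)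
    (case1 : iv < k' → (∀ t ∈ (Finset.range k').erase iv, B t = A t) ∧ A iv = v * B iv)
    (case2 : k' ≤ iv → (∀ t ∈ Finset.range k', B t = A t) ∧ v = 1) :
    ∏ t ∈ Finset.range k, A t = v * ∏ t ∈ Finset.range k', B t := by
  have hsplit : (∏ t ∈ Finset.range k', A t) * ∏ t ∈ Finset.Ico k' k, A t
      = ∏ t ∈ Finset.range k, A t := by
    rw [Finset.range_eq_Ico, Finset.range_eq_Ico]
    exact Finset.prod_Ico_consecutive _ (Nat.zero_le _) (by omega)
  have hico1 : ∏ t ∈ Finset.Ico k' k, A t = 1 := Finset.prod_eq_one hIco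
  rw [← hsplit, hico1, mul_one]
  rcases Nat.lt_or_ge iv k' with hc | hc
  · obtain ⟨hBA, hAi⟩ := case1 hc
    rw [← Finset.prod_erase_mul _ _ (Finset.mem_range.mpr hc),
      ← Finset.prod_erase_mul _ _ (Finset.mem_range.mpr hc),
      Finset.prod_congr rfl hBA, hAi]
    ring
  · obtain ⟨hBA, hv⟩ := case2 hc
    rw [Finset.prod_congr rfl hBA, hv, one_mul]

lemma phi_fact {k : ℕ} (i : Fin k) (h : Fin k → Fin (k + 1))
    (hcond : ∑ j : Fin k, ((j : ℕ) + 1) * ((h j : ℕ)) = k) (hne : (h i : ℕ) ≠ 0) :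
    (∏ j : Fin k, Nat.factorial ((h j : ℕ)))
      = (h i : ℕ) * ∏ j : Fin (k - ((i : ℕ) + 1)), Nat.factorial ((phiMap i h j : ℕ)) := by
  obtain ⟨G1, G2, G3, G4⟩ := facts i h hcond hne
  have him : (i : ℕ) + 1 ≤ k := i.isLt
  rw [fin_fact_prod, fin_fact_prod]
  refine prod_core k (k - ((i : ℕ) + 1)) (i : ℕ) (h i : ℕ) _ _ (by omega) i.isLt ?_ ?_ ?_
  · intro t ht
    obtain ⟨ht1, ht2⟩ := Finset.mem_Ico.mp ht
    simp only [dif_pos ht2]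
    rcases eq_or_ne t ((i : ℕ)) with hti | hti
    · have heq : (⟨t, ht2⟩ : Fin k) = i := Fin.ext hti
      rw [heq, G2 (by omega)]
      rfl
    · have hne' : (⟨t, ht2⟩ : Fin k) ≠ i := by
        intro hh; exact hti (congrArg Fin.val hh)
      rw [G1 _ hne' (by simpa using ht1)]
      rfl
  · intro hc
    constructor
    · intro t ht
      obtain ⟨htne, htmem⟩ := Finset.mem_erase.mp ht
      have ht' : t < k - ((i : ℕ) + 1) := Finset.mem_range.mp htmem
      have htk : t < k := by omega
      simp only [dif_pos ht', dif_pos htk, phi_val i h hcond hne]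
      rw [if_neg htne, Nat.sub_zero]
      rfl
    · simp only [dif_pos hc, dif_pos i.isLt, phi_val i h hcond hne]
      show Nat.factorial (h ⟨(i : ℕ), i.isLt⟩ : ℕ)
          = (h i : ℕ) * Nat.factorial ((h i : ℕ) - 1)
      have heta : (h ⟨(i : ℕ), i.isLt⟩ : ℕ) = (h i : ℕ) := by congr 1
      rw [heta]
      obtain ⟨t, htt⟩ : ∃ t, (h i : ℕ) = t + 1 := ⟨(h i : ℕ) - 1, by omega⟩
      rw [htt]
      simp [Nat.factorial_succ]
  · intro hc
    constructor
    · intro t ht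
      have ht' : t < k - ((i : ℕ) + 1) := Finset.mem_range.mp ht
      have htk : t < k := by omega
      simp only [dif_pos ht', dif_pos htk, phi_val i h hcond hne]
      rw [if_neg (by omega : ¬ t = (i : ℕ)), Nat.sub_zero]
      rfl
    · exact G2 hc

lemma phi_prod {g k : ℕ} (D : Fin k → Module.End ℂ (MvPolynomial (Fin g) ℂ))
    (hD : ∀ a b, Commute (D a) (D b)) (i : Fin k) (h : Fin k → Fin (k + 1))
    (hcond : ∑ j : Fin k, ((j : ℕ) + 1) * ((h j : ℕ)) = k) (hne : (h i : ℕ) ≠ 0) :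
    (List.ofFn fun j : Fin k => (D j) ^ ((h j : ℕ))).prod
      = D i * (List.ofFn fun j : Fin (k - ((i : ℕ) + 1)) =>
          (D (Fin.castLE (Nat.sub_le k ((i : ℕ) + 1)) j)) ^ ((phiMap i h j : ℕ))).prod := by
  obtain ⟨G1, G2, G3, G4⟩ := facts i h hcond hne
  have hexp : (fun j : Fin k => (D j) ^ ((h j : ℕ)))
      = fun j : Fin k => (D j) ^ ((if j = i then 1 else 0)
          + ((h j : ℕ) - if j = i then 1 else 0)) := by
    funext j
    congr 1
    split_ifs with hji
    · subst hji; omega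
    · omega
  rw [hexp, prod_ofFn_pow_add D hD, prod_ofFn_pow_single D i]
  congr 1
  rw [prod_ofFn_restrict (Nat.sub_le k ((i : ℕ) + 1)) D
    (fun j => (h j : ℕ) - if j = i then 1 else 0) ?hzero]
  case hzero =>
    intro j hj
    rcases eq_or_ne j i with rfl | hji
    · rw [if_pos rfl, G2 hj]
    · rw [if_neg hji, G1 j hji hj, Nat.sub_zero]
  congr 1
  congr 1
  funext j
  congr 1
  rw [phi_val i h hcond hne j]
  congr 1
  rcases eq_or_ne ((j : ℕ)) ((i : ℕ)) with hji | hji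
  · have hcast : Fin.castLE (Nat.sub_le k ((i : ℕ) + 1)) j = i := Fin.ext hji
    rw [if_pos hji, if_pos hcast]
  · have hcast : Fin.castLE (Nat.sub_le k ((i : ℕ) + 1)) j ≠ i :=
      fun hc => hji (congrArg Fin.val hc)
    rw [if_neg hji, if_neg hcast]

lemma claim_i {g k : ℕ} (D : Fin k → Module.End ℂ (MvPolynomial (Fin g) ℂ))
    (hD : ∀ a b, Commute (D a) (D b)) (i : Fin k) :
    ∑ h ∈ Finset.univ.filter
        (fun h : Fin k → Fin (k + 1) => ∑ j : Fin k, ((j : ℕ) + 1) * ((h j : ℕ)) = k),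
      (((h i : ℕ) : ℂ) * (((∏ j : Fin k, Nat.factorial ((h j : ℕ))) : ℕ) : ℂ)⁻¹) •
        (List.ofFn fun j : Fin k => (D j) ^ ((h j : ℕ))).prod
    = D i * deltaFormula (k - ((i : ℕ) + 1))
        (fun j => D (Fin.castLE (Nat.sub_le k ((i : ℕ) + 1)) j)) := by
  rw [deltaFormula, Finset.mul_sum]
  have hrhs : ∀ h' ∈ Finset.univ.filter
      (fun h' : Fin (k - ((i : ℕ) + 1)) → Fin (k - ((i : ℕ) + 1) + 1) =>
        ∑ j : Fin (k - ((i : ℕ) + 1)), ((j : ℕ) + 1) * ((h' j : ℕ)) = k - ((i : ℕ) + 1)),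
      D i * ((((∏ j : Fin (k - ((i : ℕ) + 1)), Nat.factorial ((h' j : ℕ))) : ℕ) : ℂ)⁻¹ •
        (List.ofFn fun j : Fin (k - ((i : ℕ) + 1)) => (D (Fin.castLE (Nat.sub_le k ((i : ℕ) + 1)) j)) ^ ((h' j : ℕ))).prod)
      = (((∏ j : Fin (k - ((i : ℕ) + 1)), Nat.factorial ((h' j : ℕ))) : ℕ) : ℂ)⁻¹ •
        (D i * (List.ofFn fun j : Fin (k - ((i : ℕ) + 1)) => (D (Fin.castLE (Nat.sub_le k ((i : ℕ) + 1)) j)) ^ ((h' j : ℕ))).prod) :=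
    fun h' _ => mul_smul_comm _ _ _
  rw [Finset.sum_congr rfl hrhs]
  have hzero : ∑ h ∈ (Finset.univ.filter
      (fun h : Fin k → Fin (k + 1) => ∑ j : Fin k, ((j : ℕ) + 1) * ((h j : ℕ)) = k)).filter
        (fun h => ((h i : ℕ)) ≠ 0),
      (((h i : ℕ) : ℂ) * (((∏ j : Fin k, Nat.factorial ((h j : ℕ))) : ℕ) : ℂ)⁻¹) •
        (List.ofFn fun j : Fin k => (D j) ^ ((h j : ℕ))).prod
    = ∑ h ∈ Finset.univ.filter
      (fun h : Fin k → Fin (k + 1) => ∑ j : Fin k, ((j : ℕ) + 1) * ((h j : ℕ)) = k),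
      (((h i : ℕ) : ℂ) * (((∏ j : Fin k, Nat.factorial ((h j : ℕ))) : ℕ) : ℂ)⁻¹) •
        (List.ofFn fun j : Fin k => (D j) ^ ((h j : ℕ))).prod := by
    apply Finset.sum_filter_of_ne
    intro h hmem hne0
    intro hc
    apply hne0
    rw [hc]
    simp
  rw [← hzero]
  refine Finset.sum_nbij' (phiMap i) (psiMap i) ?hi ?hj ?hleft ?hright ?heq
  · intro h hmem
    rw [Finset.mem_filter] at hmem ⊢
    obtain ⟨hmem1, hne⟩ := hmem
    rw [Finset.mem_filter] at hmem1
    exact ⟨Finset.mem_univ _, phi_weight i h hmem1.2 hne⟩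
  · intro h' hmem
    rw [Finset.mem_filter] at hmem
    rw [Finset.mem_filter, Finset.mem_filter]
    exact ⟨⟨Finset.mem_univ _, psi_weight i h' hmem.2⟩, psi_ne_zero i h' hmem.2⟩
  · intro h hmem
    rw [Finset.mem_filter, Finset.mem_filter] at hmem
    exact phi_psi_left i h hmem.1.2 hmem.2
  · intro h' hmem
    rw [Finset.mem_filter] at hmem
    exact psi_phi_right i h' hmem.2
  · intro h hmem
    rw [Finset.mem_filter, Finset.mem_filter] at hmem
    obtain ⟨⟨_, hcond⟩, hne⟩ := hmem
    rw [phi_prod D hD i h hcond hne, phi_fact i h hcond hne]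
    congr 1
    rw [Nat.cast_mul, mul_inv, ← mul_assoc,
      mul_inv_cancel₀ (Nat.cast_ne_zero.mpr hne), one_mul]

lemma lemB {g k : ℕ} (D : Fin k → Module.End ℂ (MvPolynomial (Fin g) ℂ))
    (hD : ∀ a b, Commute (D a) (D b)) :
    (k : ℂ) • deltaFormula k D
      = ∑ i : Fin k, (((i : ℕ) + 1 : ℕ) : ℂ) •
          (D i * deltaFormula (k - ((i : ℕ) + 1))
            (fun j => D (Fin.castLE (Nat.sub_le k ((i : ℕ) + 1)) j))) := by
  rw [deltaFormula, Finset.smul_sum]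
  have hterm : ∀ h ∈ Finset.univ.filter
      (fun h : Fin k → Fin (k + 1) => ∑ i : Fin k, ((i : ℕ) + 1) * ((h i : ℕ)) = k),
      (k : ℂ) • ((((∏ i : Fin k, Nat.factorial ((h i : ℕ))) : ℕ) : ℂ)⁻¹ •
        (List.ofFn fun i : Fin k => (D i) ^ ((h i : ℕ))).prod)
      = ∑ i : Fin k, (((((i : ℕ) + 1) * ((h i : ℕ))) : ℕ) : ℂ) •
        ((((∏ i : Fin k, Nat.factorial ((h i : ℕ))) : ℕ) : ℂ)⁻¹ •
          (List.ofFn fun i : Fin k => (D i) ^ ((h i : ℕ))).prod) := by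
    intro h hm
    rw [Finset.mem_filter] at hm
    rw [← Finset.sum_smul, ← Nat.cast_sum, hm.2]
  rw [Finset.sum_congr rfl hterm, Finset.sum_comm]
  refine Finset.sum_congr rfl fun i _ => ?_
  have hterm2 : ∀ h ∈ Finset.univ.filter
      (fun h : Fin k → Fin (k + 1) => ∑ i : Fin k, ((i : ℕ) + 1) * ((h i : ℕ)) = k),
      (((((i : ℕ) + 1) * ((h i : ℕ))) : ℕ) : ℂ) •
        ((((∏ i : Fin k, Nat.factorial ((h i : ℕ))) : ℕ) : ℂ)⁻¹ •
          (List.ofFn fun i : Fin k => (D i) ^ ((h i : ℕ))).prod)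
      = ((((i : ℕ) + 1 : ℕ)) : ℂ) •
        ((((h i : ℕ) : ℂ) * (((∏ i : Fin k, Nat.factorial ((h i : ℕ))) : ℕ) : ℂ)⁻¹) •
          (List.ofFn fun i : Fin k => (D i) ^ ((h i : ℕ))).prod) := by
    intro h _
    rw [smul_smul, smul_smul]
    congr 1
    push_cast
    ring
  rw [Finset.sum_congr rfl hterm2, ← Finset.smul_sum, claim_i D hD i]


lemma delta_zero {g : ℕ} (D : Fin 0 → Module.End ℂ (MvPolynomial (Fin g) ℂ)) :
    deltaFormula 0 D = 1 := by
  rw [deltaFormula]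
  rw [show (Finset.univ.filter
      (fun h : Fin 0 → Fin 1 => ∑ i : Fin 0, ((i : ℕ) + 1) * ((h i : ℕ)) = 0))
    = Finset.univ from Finset.filter_true_of_mem (fun h _ => by simp)]
  rw [Finset.sum_eq_single_of_mem (fun _ => 0) (Finset.mem_univ _)]
  · simp
  · intro h _ hne
    exact absurd (funext fun j => j.elim0) hne

lemma commute_pderiv_vecField {g : ℕ} (j : Fin g) (η : Fin g → ℂ) :
    Commute (pderivEnd j) (vecField η) := by
  rw [vecField]
  apply Commute.sum_right
  intro i _
  apply Commute.smul_right
  show pderivEnd j * pderivEnd i = pderivEnd i * pderivEnd j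
  apply LinearMap.ext
  intro f
  exact pderiv_pderiv_comm j i f

lemma commute_vecField_vecField {g : ℕ} (η η' : Fin g → ℂ) :
    Commute (vecField η) (vecField η') := by
  rw [vecField]
  apply Commute.sum_left
  intro i _
  apply Commute.smul_left
  exact commute_pderiv_vecField i η'

lemma commute_pderiv_delta {g k : ℕ} (j : Fin g)
    (D : Fin k → Module.End ℂ (MvPolynomial (Fin g) ℂ))
    (hD : ∀ i, Commute (pderivEnd j) (D i)) :
    Commute (pderivEnd j) (deltaFormula k D) := by
  rw [deltaFormula]
  apply Commute.sum_right
  intro h _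
  apply Commute.smul_right
  apply Commute.list_prod_right
  intro y hy
  rw [List.mem_ofFn] at hy
  obtain ⟨l, rfl⟩ := hy
  exact (hD l).pow_right _

lemma delta_pderiv_swap {g k : ℕ} (j : Fin g)
    (D : Fin k → Module.End ℂ (MvPolynomial (Fin g) ℂ))
    (hD : ∀ i, Commute (pderivEnd j) (D i)) (f : MvPolynomial (Fin g) ℂ) :
    deltaFormula k D (MvPolynomial.pderiv j f)
      = MvPolynomial.pderiv j (deltaFormula k D f) := by
  have := commute_pderiv_delta j D hD
  have h2 := congrFun (congrArg DFunLike.coe this.eq.symm) f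
  exact h2

lemma vecField_apply {g : ℕ} (η : Fin g → ℂ) (f : MvPolynomial (Fin g) ℂ) :
    vecField η f = ∑ i, η i • MvPolynomial.pderiv i f := by
  rw [vecField]
  rw [LinearMap.sum_apply]
  exact Finset.sum_congr rfl fun i _ => rfl

noncomputable def curve {g : ℕ} (N : ℕ) (x : Fin g → ℂ) (η : Fin N → Fin g → ℂ) :
    Fin g → Polynomial ℂ :=
  fun j => Polynomial.C (x j) + ∑ m : Fin N, Polynomial.C (η m j) * Polynomial.X ^ ((m : ℕ) + 1)

lemma chain_rule {g : ℕ} (c : Fin g → Polynomial ℂ) (f : MvPolynomial (Fin g) ℂ) :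
    Polynomial.derivative (MvPolynomial.aeval c f)
      = ∑ j, Polynomial.derivative (c j) * MvPolynomial.aeval c (MvPolynomial.pderiv j f) := by
  induction f using MvPolynomial.induction_on with
  | C a => simp
  | add p q hp hq =>
    simp only [map_add, hp, hq, mul_add, ← Finset.sum_add_distrib]
  | mul_X p j hp =>
    simp only [map_mul, MvPolynomial.aeval_X, Polynomial.derivative_mul, hp,
      MvPolynomial.pderiv_mul, MvPolynomial.pderiv_X, map_add, mul_add,
      Finset.sum_add_distrib, Finset.sum_mul]
    refine congrArg₂ (· + ·) ?_ ?_
    · exact Finset.sum_congr rfl fun l _ => by ring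
    · rw [Finset.sum_eq_single_of_mem j (Finset.mem_univ j)]
      · simp [mul_comm]
      · intro l _ hlj
        simp [Pi.single_apply, if_neg (Ne.symm hlj)]

lemma coeff_zero_aeval_curve {g N : ℕ} (x : Fin g → ℂ) (η : Fin N → Fin g → ℂ)
    (f : MvPolynomial (Fin g) ℂ) :
    (MvPolynomial.aeval (curve N x η) f).coeff 0 = MvPolynomial.eval x f := by
  rw [Polynomial.coeff_zero_eq_eval_zero]
  have hcomp : Polynomial.eval 0 (MvPolynomial.aeval (curve N x η) f)
      = MvPolynomial.eval₂ ((Polynomial.evalRingHom 0).comp (algebraMap ℂ (Polynomial ℂ)))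
          ((Polynomial.evalRingHom 0) ∘ (curve N x η)) f := by
    rw [MvPolynomial.aeval_def, ← MvPolynomial.eval₂_comp_left (Polynomial.evalRingHom 0)]
    rfl
  rw [hcomp]
  have h1 : (Polynomial.evalRingHom (0 : ℂ)).comp (algebraMap ℂ (Polynomial ℂ))
      = RingHom.id ℂ := by
    ext a; simp
  have h2 : (Polynomial.evalRingHom (0 : ℂ)) ∘ (curve N x η) = x := by
    funext j
    simp [curve, Polynomial.eval_finset_sum]
  rw [h1, h2]
  rfl

lemma coeff_derivative_curve {g N : ℕ} (x : Fin g → ℂ) (η : Fin N → Fin g → ℂ) (j : Fin g)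
    (a : ℕ) (ha : a < N) :
    (Polynomial.derivative (curve N x η j)).coeff a = ((a : ℂ) + 1) * η ⟨a, ha⟩ j := by
  rw [curve]
  simp only [Polynomial.derivative_add, Polynomial.derivative_C, Polynomial.derivative_sum,
    zero_add, Polynomial.coeff_add]
  have hder : ∀ m : Fin N,
      Polynomial.derivative (Polynomial.C (η m j) * Polynomial.X ^ ((m : ℕ) + 1))
        = Polynomial.C (η m j * ((m : ℕ) + 1)) * Polynomial.X ^ (m : ℕ) := by
    intro m
    rw [Polynomial.derivative_C_mul_X_pow]
    norm_num
  rw [Finset.sum_congr rfl (fun m _ => hder m), Polynomial.finset_sum_coeff]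
  rw [Finset.sum_eq_single_of_mem (⟨a, ha⟩ : Fin N) (Finset.mem_univ _)]
  · rw [Polynomial.coeff_C_mul, Polynomial.coeff_X_pow, if_pos rfl, mul_one]
    push_cast
    ring
  · intro m _ hm
    rw [Polynomial.coeff_C_mul, Polynomial.coeff_X_pow,
      if_neg (fun hc : a = (m : ℕ) => hm (Fin.ext hc.symm)), mul_zero]

lemma taylor {g N : ℕ} (x : Fin g → ℂ) (η : Fin N → Fin g → ℂ) :
    ∀ (k : ℕ) (hk : k ≤ N) (f : MvPolynomial (Fin g) ℂ),
      MvPolynomial.eval x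
          (deltaFormula k (fun i : Fin k => vecField (η (Fin.castLE hk i))) f)
        = (MvPolynomial.aeval (curve N x η) f).coeff k := by
  intro k
  induction k using Nat.strong_induction_on with
  | _ k ih =>
  rcases k with _ | k
  · intro hk f
    rw [delta_zero, Module.End.one_apply]
    exact (coeff_zero_aeval_curve x η f).symm
  intro hk f
  have hnz : ((k : ℂ) + 1) ≠ 0 := by
    have : ((k + 1 : ℕ) : ℂ) ≠ 0 := Nat.cast_ne_zero.mpr (Nat.succ_ne_zero k)
    push_cast at this
    exact this
  apply mul_left_cancel₀ hnz
  have hcomm : ∀ a b : Fin (k + 1),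
      Commute ((fun i : Fin (k + 1) => vecField (η (Fin.castLE hk i))) a)
        ((fun i : Fin (k + 1) => vecField (η (Fin.castLE hk i))) b) :=
    fun a b => commute_vecField_vecField _ _
  -- the common normal form
  set c := curve N x η with hc
  set G : ℕ → ℂ := fun m => if hm : m < N then ((m : ℂ) + 1) *
      ∑ j : Fin g, η ⟨m, hm⟩ j *
        (MvPolynomial.aeval c (MvPolynomial.pderiv j f)).coeff (k - m) else 0 with hG
  -- LHS
  have hLHS : ((k : ℂ) + 1) * MvPolynomial.eval x
      (deltaFormula (k + 1) (fun i : Fin (k + 1) => vecField (η (Fin.castLE hk i))) f)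
      = ∑ m ∈ Finset.range (k + 1), G m := by
    rw [← MvPolynomial.smul_eval]
    have hsm : ((k : ℂ) + 1) • (deltaFormula (k + 1)
        (fun i : Fin (k + 1) => vecField (η (Fin.castLE hk i))) f)
      = ((((k + 1 : ℕ)) : ℂ) • deltaFormula (k + 1)
          (fun i : Fin (k + 1) => vecField (η (Fin.castLE hk i)))) f := by
      push_cast
      rfl
    rw [hsm, lemB _ hcomm, LinearMap.sum_apply, map_sum]
    rw [← Fin.sum_univ_eq_sum_range G (k + 1)]
    refine Finset.sum_congr rfl fun i _ => ?_
    have hiN : (i : ℕ) < N := by omega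
    rw [hG]
    simp only [dif_pos hiN]
    rw [LinearMap.smul_apply, MvPolynomial.smul_eval]
    have hmul : ∀ (q : MvPolynomial (Fin g) ℂ) (A B : Module.End ℂ (MvPolynomial (Fin g) ℂ)),
        (A * B) q = A (B q) := fun _ _ _ => rfl
    rw [hmul]
    rw [vecField_apply, map_sum]
    have hterm : ∀ j : Fin g,
        MvPolynomial.eval x (η (Fin.castLE hk i) j •
          MvPolynomial.pderiv j
            (deltaFormula ((k + 1) - ((i : ℕ) + 1))
              (fun l => vecField (η (Fin.castLE hk
                (Fin.castLE (Nat.sub_le (k + 1) ((i : ℕ) + 1)) l)))) f))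
        = η ⟨(i : ℕ), hiN⟩ j *
            (MvPolynomial.aeval c (MvPolynomial.pderiv j f)).coeff (k - (i : ℕ)) := by
      intro j
      rw [MvPolynomial.smul_eval]
      congr 1
      rw [← delta_pderiv_swap j _ (fun l => commute_pderiv_vecField _ _)]
      have hb1 : (k + 1) - ((i : ℕ) + 1) < k + 1 := by omega
      have hb2 : (k + 1) - ((i : ℕ) + 1) ≤ N := by omega
      have := ih ((k + 1) - ((i : ℕ) + 1)) hb1 hb2 (MvPolynomial.pderiv j f)
      have hkk : (k + 1) - ((i : ℕ) + 1) = k - (i : ℕ) := by omega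
      rw [← hkk]
      exact this
    rw [Finset.sum_congr rfl (fun j _ => hterm j)]
    push_cast
    ring
  have hRHS : ((k : ℂ) + 1) * (MvPolynomial.aeval c f).coeff (k + 1)
      = ∑ m ∈ Finset.range (k + 1), G m := by
    have hd := Polynomial.coeff_derivative (MvPolynomial.aeval c f) k
    have e1 : ((k : ℂ) + 1) * (MvPolynomial.aeval c f).coeff (k + 1)
        = (Polynomial.derivative (MvPolynomial.aeval c f)).coeff k := by
      rw [hd]; ring
    rw [e1, chain_rule, Polynomial.finset_sum_coeff]
    have e2 : ∀ j : Fin g, (Polynomial.derivative (c j) *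
        MvPolynomial.aeval c (MvPolynomial.pderiv j f)).coeff k
        = ∑ m ∈ Finset.range (k + 1),
            (if hm : m < N then ((m : ℂ) + 1) * η ⟨m, hm⟩ j else 0) *
              (MvPolynomial.aeval c (MvPolynomial.pderiv j f)).coeff (k - m) := by
      intro j
      rw [Polynomial.coeff_mul, Finset.Nat.sum_antidiagonal_eq_sum_range_succ_mk]
      refine Finset.sum_congr rfl fun m hm => ?_
      have hmN : m < N := by have := Finset.mem_range.mp hm; omega
      rw [dif_pos hmN, coeff_derivative_curve x η j m hmN]
    rw [Finset.sum_congr rfl (fun j _ => e2 j), Finset.sum_comm]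
    refine Finset.sum_congr rfl fun m hm => ?_
    have hmN : m < N := by have := Finset.mem_range.mp hm; omega
    rw [hG]
    simp only [dif_pos hmN]
    rw [Finset.mul_sum]
    refine Finset.sum_congr rfl fun j _ => ?_
    ring
  rw [hLHS, hRHS]

/-- Let `g, N ≥ 1`, `θ ∈ ℂ[z₁,…,z_g]`, `x ∈ ℂ^g`, and
`η₁, …, η_N ∈ ℂ^g`, with `D_i = Σ_ℓ η_{iℓ} ∂/∂z_ℓ` and `Δ⁽ᵏ⁾` given by the curvilinear
formula (so `f ↦ Σ_{k≤N} (Δ⁽ᵏ⁾f)(x) tᵏ` is a `ℂ`-algebra homomorphism into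
`ℂ[t]/(t^{N+1})`).  Then this homomorphism annihilates the ideal
`(θ, ∂θ/∂z₁, …, ∂θ/∂z_g)` — i.e. the curvilinear scheme of length `N+1` at `x` lies in
the singular scheme of `θ = 0` — if and only if `θ(x) = 0` and
`(Δ⁽ᵏ⁾(∂θ/∂z_j))(x) = 0` for all `0 ≤ k ≤ N` and `1 ≤ j ≤ g`. -/
theorem curvilinear_in_singular_locus_iff (g N : ℕ) (hg : 1 ≤ g) (hN : 1 ≤ N)
    (θ : MvPolynomial (Fin g) ℂ) (x : Fin g → ℂ)
    (η : Fin N → (Fin g → ℂ))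
    (Δ : ℕ → Module.End ℂ (MvPolynomial (Fin g) ℂ))
    (hΔ : ∀ (k : ℕ) (hk : k ≤ N),
      Δ k = deltaFormula k (fun i => vecField (η (Fin.castLE hk i)))) :
    ((∀ f ∈ Ideal.span
        ({θ} ∪ Set.range fun j : Fin g => (MvPolynomial.pderiv j θ : MvPolynomial (Fin g) ℂ)),
        ∀ k ≤ N, MvPolynomial.eval x (Δ k f) = 0)
      ↔
     (MvPolynomial.eval x θ = 0 ∧
      ∀ k ≤ N, ∀ j : Fin g, MvPolynomial.eval x (Δ k (MvPolynomial.pderiv j θ)) = 0)) := by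
  constructor
  · intro hL
    constructor
    · have h0 := hL θ (Ideal.subset_span (Or.inl rfl)) 0 (Nat.zero_le N)
      rw [hΔ 0 (Nat.zero_le N), delta_zero, Module.End.one_apply] at h0
      exact h0
    · intro k hk j
      exact hL _ (Ideal.subset_span (Or.inr ⟨j, rfl⟩)) k hk
  · rintro ⟨hθx, hpd⟩ f hf k hk
    rw [hΔ k hk, taylor x η k hk f]
    set c := curve N x η with hc
    have Ppd : ∀ (j : Fin g), ∀ m ≤ N,
        (MvPolynomial.aeval c (MvPolynomial.pderiv j θ)).coeff m = 0 := by
      intro j m hm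
      rw [← taylor x η m hm (MvPolynomial.pderiv j θ), ← hΔ m hm]
      exact hpd m hm j
    have Pθ : ∀ m ≤ N, (MvPolynomial.aeval c θ).coeff m = 0 := by
      intro m hm
      rcases m with _ | m
      · rw [coeff_zero_aeval_curve]; exact hθx
      · have hnz : ((m : ℂ) + 1) ≠ 0 := by
          have : ((m + 1 : ℕ) : ℂ) ≠ 0 := Nat.cast_ne_zero.mpr (Nat.succ_ne_zero m)
          push_cast at this
          exact this
        have e1 : ((m : ℂ) + 1) * (MvPolynomial.aeval c θ).coeff (m + 1)
            = (Polynomial.derivative (MvPolynomial.aeval c θ)).coeff m := by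
          rw [Polynomial.coeff_derivative]; ring
        have e2 : (Polynomial.derivative (MvPolynomial.aeval c θ)).coeff m = 0 := by
          rw [chain_rule, Polynomial.finset_sum_coeff]
          apply Finset.sum_eq_zero
          intro j _
          rw [Polynomial.coeff_mul]
          apply Finset.sum_eq_zero
          intro ab hab
          have hadd : ab.1 + ab.2 = m := Finset.HasAntidiagonal.mem_antidiagonal.mp hab
          have hb : ab.2 ≤ N := by omega
          rw [Ppd j ab.2 hb, mul_zero]
        have e3 : ((m : ℂ) + 1) * (MvPolynomial.aeval c θ).coeff (m + 1) = 0 := e1.trans e2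
        rcases mul_eq_zero.mp e3 with h | h
        · exact absurd h hnz
        · exact h
    have main : ∀ q, q ∈ Ideal.span
        ({θ} ∪ Set.range fun j : Fin g =>
          (MvPolynomial.pderiv j θ : MvPolynomial (Fin g) ℂ)) →
        ∀ m ≤ N, (MvPolynomial.aeval c q).coeff m = 0 := by
      intro q hq
      refine Submodule.span_induction ?_ ?_ ?_ ?_ hq
      · intro z hz
        rcases hz with hz | ⟨j, rfl⟩
        · rw [Set.mem_singleton_iff] at hz
          subst hz
          exact Pθ
        · exact Ppd j
      · intro m _
        simp
      · intro y z _ _ hy hz m hm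
        rw [map_add, Polynomial.coeff_add, hy m hm, hz m hm, add_zero]
      · intro a z _ hz m hm
        have : a • z = a * z := rfl
        rw [this, map_mul, Polynomial.coeff_mul]
        apply Finset.sum_eq_zero
        intro ab hab
        have hadd : ab.1 + ab.2 = m := Finset.HasAntidiagonal.mem_antidiagonal.mp hab
        rw [hz ab.2 (by omega), mul_zero]
    exact main f hf k hk
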